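/- Let h : V → E be C² on a neighborhood V of ȳ ∈ Y with h(ȳ) = 0 and ∇h(ȳ) surjective, let K ⊆ E be a closed convex cone, and set C ∩ V = {y ∈ V : h(y) ∈ K}. Then the normal cone of C at ȳ (regular/Fréchet normal cone) equals ∇h(ȳ)* N_K(0) = ∇h(ȳ)* K*, and C is normally regular at ȳ (the regular and limiting normal cones coincide). -/

import Mathlib

open Set Filter Topology Metric
open scoped Pointwise

variable {Y : Type*} [NormedAddCommGroup Y] [InnerProductSpace ℝ Y]

/-- The polar cone `K* = {μ : ⟪μ, k⟫ ≤ 0 for all k ∈ K}`. -/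
def polarCone (K : Set Y) : Set Y := {μ | ∀ k ∈ K, @inner ℝ _ _ μ k ≤ 0}

/-- The regular (Fréchet) normal cone:
`N̂_C(ȳ) = {v : limsup_{y →_C ȳ} ⟪v, y - ȳ⟫ / ‖y - ȳ‖ ≤ 0}`. -/
def regNormalCone (C : Set Y) (y0 : Y) : Set Y :=
  {v | ∀ ε > (0 : ℝ), ∀ᶠ y in 𝓝[C] y0, @inner ℝ _ _ v (y - y0) ≤ ε * ‖y - y0‖}

/-- The limiting (Mordukhovich) normal cone. -/
def limNormalCone (C : Set Y) (y0 : Y) : Set Y :=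
  {v | ∃ z : ℕ → Y, ∃ w : ℕ → Y, (∀ n, z n ∈ C) ∧ Tendsto z atTop (𝓝 y0) ∧
      (∀ n, w n ∈ regNormalCone C (z n)) ∧ Tendsto w atTop (𝓝 v)}

section AuxLemmas

variable {Y E : Type*} [NormedAddCommGroup Y] [InnerProductSpace ℝ Y] [FiniteDimensional ℝ Y]
  [NormedAddCommGroup E] [InnerProductSpace ℝ E] [FiniteDimensional ℝ E]

private lemma range_adjoint_eq (A : Y →L[ℝ] E) :
    LinearMap.range ((ContinuousLinearMap.adjoint A : E →L[ℝ] Y) : E →ₗ[ℝ] Y) = (LinearMap.ker (A : Y →ₗ[ℝ] E))ᗮ := by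
  have h1 : (LinearMap.range ((ContinuousLinearMap.adjoint A : E →L[ℝ] Y) : E →ₗ[ℝ] Y))ᗮ = LinearMap.ker (A : Y →ₗ[ℝ] E) := by
    ext x
    simp only [Submodule.mem_orthogonal, LinearMap.mem_range, LinearMap.mem_ker]
    constructor
    · intro hx
      have h2 := hx (ContinuousLinearMap.adjoint A (A x)) ⟨A x, rfl⟩
      rw [ContinuousLinearMap.adjoint_inner_left] at h2
      exact inner_self_eq_zero.mp h2
    · rintro hAx u ⟨μ, rfl⟩
      rw [ContinuousLinearMap.coe_coe, ContinuousLinearMap.adjoint_inner_left, ← ContinuousLinearMap.coe_coe, hAx, inner_zero_right]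
  calc LinearMap.range ((ContinuousLinearMap.adjoint A : E →L[ℝ] Y) : E →ₗ[ℝ] Y)
      = ((LinearMap.range ((ContinuousLinearMap.adjoint A : E →L[ℝ] Y) : E →ₗ[ℝ] Y))ᗮ)ᗮ :=
        (Submodule.orthogonal_orthogonal _).symm
    _ = (LinearMap.ker (A : Y →ₗ[ℝ] E))ᗮ := by rw [h1]


private lemma surj_of_inj_adjoint (A : Y →L[ℝ] E)
    (hinj : Function.Injective (ContinuousLinearMap.adjoint A)) :
    Function.Surjective A := by
  rw [← ContinuousLinearMap.coe_coe, ← LinearMap.range_eq_top]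
  have h1 : (LinearMap.range (A : Y →ₗ[ℝ] E))ᗮ = ⊥ := by
    ext μ
    simp only [Submodule.mem_orthogonal, LinearMap.mem_range, Submodule.mem_bot]
    constructor
    · intro hμ
      have h2 : ContinuousLinearMap.adjoint A μ = 0 := by
        have h3 : (inner ℝ (ContinuousLinearMap.adjoint A μ) (ContinuousLinearMap.adjoint A μ) : ℝ) = 0 := by
          rw [ContinuousLinearMap.adjoint_inner_right]
          exact hμ _ ⟨_, rfl⟩
        exact inner_self_eq_zero.mp h3
      have := hinj (a₁ := μ) (a₂ := 0) (by rw [h2, map_zero])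
      exact this
    · rintro rfl u ⟨x, rfl⟩
      exact inner_zero_right _
  have h2 := congrArg Submodule.orthogonal h1
  rwa [Submodule.orthogonal_orthogonal, Submodule.bot_orthogonal_eq_top] at h2

private lemma key_dir (C V : Set Y) (hVopen : IsOpen V) (h : Y → E) (hh : ContDiffOn ℝ 2 h V)
    (K : Set E) (hKconv : Convex ℝ K)
    (hred : C ∩ V = {y ∈ V | h y ∈ K})
    {z : Y} (hzC : z ∈ C) (hzV : z ∈ V)
    (hsurj : Function.Surjective (fderiv ℝ h z))
    {d : Y} (hd : fderiv ℝ h z d + h z ∈ K)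
    {v : Y} (hv : v ∈ regNormalCone C z) :
    (inner ℝ v d : ℝ) ≤ 0 := by
  set A := fderiv ℝ h z with hA
  have hzK : h z ∈ K := by
    have h1 : z ∈ C ∩ V := ⟨hzC, hzV⟩
    rw [hred] at h1; exact h1.2
  have hstrict : HasStrictFDerivAt h A z :=
    (hh.contDiffAt (hVopen.mem_nhds hzV)).hasStrictFDerivAt two_ne_zero
  obtain ⟨f'symm, hMpos⟩ :=
    ContinuousLinearMap.exists_nonlinearRightInverse_of_surjective A (LinearMap.range_eq_top.2 hsurj)
  set M : NNReal := f'symm.nnnorm with hM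
  set cN : NNReal := (2 * M)⁻¹ with hcN
  have hMR : (0:ℝ) < (M:ℝ) := hMpos
  have hcR : (cN : ℝ) = (2 * (M:ℝ))⁻¹ := by rw [hcN]; push_cast; ring
  have hcpos : (0:ℝ) < (cN:ℝ) := by rw [hcR]; positivity
  have hcposN : (0:NNReal) < cN := by exact_mod_cast hcpos
  have hgap : ((M:ℝ))⁻¹ - (cN:ℝ) = (cN:ℝ) := by rw [hcR]; field_simp; ring
  obtain ⟨s', hs'nhds, happrox⟩ := hstrict.approximates_deriv_on_nhds (Or.inr hcposN)
  suffices hsuff : ∀ ε : ℝ, 0 < ε → ε ≤ 1 → (inner ℝ v d : ℝ) ≤ ε * (‖d‖ + 1 + ‖v‖) by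
    by_contra h0
    push_neg at h0
    have hCst : (0:ℝ) < ‖d‖ + 1 + ‖v‖ := by positivity
    have hC1 : (1:ℝ) ≤ ‖d‖ + 1 + ‖v‖ := by
      have := norm_nonneg d; have := norm_nonneg v; linarith
    set I := (inner ℝ v d : ℝ) with hI
    set ε := min 1 (I / (2 * (‖d‖ + 1 + ‖v‖))) with hε
    have hεpos : 0 < ε := lt_min one_pos (by positivity)
    have := hsuff ε hεpos (min_le_left _ _)
    have h2 : ε ≤ I / (2 * (‖d‖ + 1 + ‖v‖)) := min_le_right _ _
    have h3 : ε * (‖d‖ + 1 + ‖v‖) ≤ I / 2 := by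
      calc ε * (‖d‖ + 1 + ‖v‖) ≤ (I / (2 * (‖d‖ + 1 + ‖v‖))) * (‖d‖ + 1 + ‖v‖) :=
            mul_le_mul_of_nonneg_right h2 (le_of_lt hCst)
        _ = I / 2 := by field_simp
    linarith
  intro ε hεpos hε1
  have F1 := hv ε hεpos
  rw [eventually_nhdsWithin_iff] at F1
  have hd1 : (0:ℝ) < ‖d‖ + 1 := by positivity
  have F2 : ∀ᶠ y in 𝓝 z, ‖h y - h z - A (y - z)‖ ≤ ((cN:ℝ) * ε / (‖d‖ + 1)) * ‖y - z‖ := by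
    have hlo := (hstrict.hasFDerivAt (f := h) (f' := A) (x := z)).isLittleO
    exact (hlo.def (by positivity)).mono fun y hy => hy
  have F3 : ∀ᶠ y in 𝓝 z, y ∈ s' := hs'nhds
  have F4 : ∀ᶠ y in 𝓝 z, y ∈ V := hVopen.mem_nhds hzV
  obtain ⟨δ, hδpos, hδ⟩ := Metric.eventually_nhds_iff.1 (((F1.and F2).and F3).and F4)
  set t := min (δ / (2 * (‖d‖ + ε + 1))) 1 with htdef
  have htpos : 0 < t := lt_min (by positivity) one_pos
  have ht1 : t ≤ 1 := min_le_right _ _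
  have htδ : t * (‖d‖ + ε) < δ := by
    have h2 : t ≤ δ / (2 * (‖d‖ + ε + 1)) := min_le_left _ _
    have h3 : 0 < 2 * (‖d‖ + ε + 1) := by positivity
    rw [le_div_iff₀ h3] at h2
    nlinarith [norm_nonneg d]
  set b := z + t • d with hbdef
  have hbz : ‖b - z‖ = t * ‖d‖ := by
    rw [hbdef]; simp [norm_smul, abs_of_pos htpos]
  have hball : ∀ y : Y, dist y b ≤ ε * t → dist y z < δ := by
    intro y hy
    calc dist y z ≤ dist y b + dist b z := dist_triangle _ _ _
      _ ≤ ε * t + t * ‖d‖ := by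
          refine add_le_add hy ?_
          rw [dist_eq_norm, hbz]
      _ = t * (‖d‖ + ε) := by ring
      _ < δ := htδ
  have hbz' : dist b z < δ := hball b (by simp [mul_nonneg hεpos.le htpos.le])
  -- the target point in K
  set w := h z + t • (A d) with hwdef
  have hwK : w ∈ K := by
    have h1 : w = (1 - t) • (h z) + t • (A d + h z) := by
      rw [hwdef]; module
    rw [h1]
    exact hKconv hzK hd (by linarith) htpos.le (by ring)
  have hwb : dist w (h b) ≤ (cN:ℝ) * (ε * t) := by
    have h1 : h b - h z - A (b - z) = h b - w := by
      rw [hwdef, hbdef]; simp [map_smul]; abel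
    have h2 := ((hδ hbz').1.1.2)
    rw [h1] at h2
    rw [dist_eq_norm, norm_sub_rev]
    calc ‖h b - w‖ ≤ ((cN:ℝ) * ε / (‖d‖ + 1)) * ‖b - z‖ := h2
      _ = (cN:ℝ) * ε * t * (‖d‖ / (‖d‖ + 1)) := by rw [hbz]; ring
      _ ≤ (cN:ℝ) * ε * t * 1 := by
          refine mul_le_mul_of_nonneg_left ?_ (by positivity)
          rw [div_le_one hd1]; linarith
      _ = (cN:ℝ) * (ε * t) := by ring
  have hsubset : closedBall b (ε * t) ⊆ s' := fun y hy => (hδ (hball y (mem_closedBall.1 hy))).1.2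
  have hsurjOn := happrox.surjOn_closedBall_of_nonlinearRightInverse f'symm
    (by positivity : (0:ℝ) ≤ ε * t) hsubset
  have hwmem : w ∈ closedBall (h b) (((f'symm.nnnorm : ℝ)⁻¹ - cN) * (ε * t)) := by
    rw [mem_closedBall, ← hM, hgap]
    exact hwb
  obtain ⟨y, hyball, hyw⟩ := hsurjOn hwmem
  have hyz : dist y z < δ := hball y (mem_closedBall.1 hyball)
  have hyV : y ∈ V := (hδ hyz).2
  have hyC : y ∈ C := by
    have h1 : y ∈ ({y ∈ V | h y ∈ K} : Set Y) := ⟨hyV, by rw [hyw]; exact hwK⟩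
    rw [← hred] at h1
    exact h1.1
  have hynorm := (hδ hyz).1.1.1 hyC
  -- arithmetic
  have hyb : ‖y - b‖ ≤ ε * t := by
    have := mem_closedBall.1 hyball
    rwa [dist_eq_norm] at this
  have e1 : (inner ℝ v (y - z) : ℝ) = t * inner ℝ v d + inner ℝ v (y - b) := by
    have h1 : y - z = t • d + (y - b) := by rw [hbdef]; abel
    rw [h1, inner_add_right, real_inner_smul_right]
  have e2 : -(‖v‖ * (ε * t)) ≤ (inner ℝ v (y - b) : ℝ) := by
    have h1 : |(inner ℝ v (y - b) : ℝ)| ≤ ‖v‖ * ‖y - b‖ := abs_real_inner_le_norm _ _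
    have h2 : ‖v‖ * ‖y - b‖ ≤ ‖v‖ * (ε * t) := mul_le_mul_of_nonneg_left hyb (norm_nonneg _)
    have := neg_abs_le (inner ℝ v (y - b) : ℝ)
    linarith
  have e3 : ‖y - z‖ ≤ t * ‖d‖ + ε * t := by
    calc ‖y - z‖ = ‖(y - b) + (b - z)‖ := by abel_nf
      _ ≤ ‖y - b‖ + ‖b - z‖ := norm_add_le _ _
      _ ≤ ε * t + t * ‖d‖ := by rw [hbz]; exact add_le_add hyb le_rfl
      _ = t * ‖d‖ + ε * t := by ring
  have e4 : t * (inner ℝ v d : ℝ) ≤ ε * (t * ‖d‖ + ε * t) + ‖v‖ * (ε * t) := by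
    have h1 : (inner ℝ v (y - z) : ℝ) ≤ ε * ‖y - z‖ := hynorm
    have h2 : ε * ‖y - z‖ ≤ ε * (t * ‖d‖ + ε * t) := mul_le_mul_of_nonneg_left e3 hεpos.le
    linarith [e1 ▸ h1]
  have e5 : t * (inner ℝ v d : ℝ) ≤ t * (ε * (‖d‖ + 1 + ‖v‖)) := by
    calc t * (inner ℝ v d : ℝ) ≤ ε * (t * ‖d‖ + ε * t) + ‖v‖ * (ε * t) := e4
      _ = t * (ε * (‖d‖ + ε + ‖v‖)) := by ring
      _ ≤ t * (ε * (‖d‖ + 1 + ‖v‖)) := by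
          refine mul_le_mul_of_nonneg_left (mul_le_mul_of_nonneg_left ?_ hεpos.le) htpos.le
          linarith
  exact le_of_mul_le_mul_left e5 htpos

private lemma rep_of_regNormal (C V : Set Y) (hVopen : IsOpen V) (h : Y → E) (hh : ContDiffOn ℝ 2 h V)
    (K : Set E) (hKconv : Convex ℝ K)
    (hred : C ∩ V = {y ∈ V | h y ∈ K})
    {z : Y} (hzC : z ∈ C) (hzV : z ∈ V)
    (hsurj : Function.Surjective (fderiv ℝ h z))
    {v : Y} (hv : v ∈ regNormalCone C z) :
    ∃ μ : E, (∀ k ∈ K, (inner ℝ μ (k - h z) : ℝ) ≤ 0) ∧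
      ContinuousLinearMap.adjoint (fderiv ℝ h z) μ = v := by
  set A := fderiv ℝ h z with hA
  have hzK : h z ∈ K := by
    have h1 : z ∈ C ∩ V := ⟨hzC, hzV⟩
    rw [hred] at h1; exact h1.2
  have hker : ∀ d : Y, A d = 0 → (inner ℝ v d : ℝ) = 0 := by
    intro d hd0
    have h1 : (inner ℝ v d : ℝ) ≤ 0 :=
      key_dir C V hVopen h hh K hKconv hred hzC hzV hsurj
        (by rw [← hA, hd0, zero_add]; exact hzK) hv
    have h2 : (inner ℝ v (-d) : ℝ) ≤ 0 :=
      key_dir C V hVopen h hh K hKconv hred hzC hzV hsurj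
        (by rw [← hA, map_neg, hd0, neg_zero, zero_add]; exact hzK) hv
    rw [inner_neg_right] at h2
    linarith
  have hvmem : v ∈ (LinearMap.ker (A : Y →ₗ[ℝ] E))ᗮ := by
    rw [Submodule.mem_orthogonal]
    intro u hu
    rw [real_inner_comm]
    exact hker u (LinearMap.mem_ker.1 hu)
  rw [← range_adjoint_eq] at hvmem
  obtain ⟨μ, hμ⟩ := hvmem
  refine ⟨μ, ?_, hμ⟩
  intro k hk
  obtain ⟨dd, hdk⟩ := hsurj (k - h z)
  have h1 : (inner ℝ v dd : ℝ) ≤ 0 := by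
    refine key_dir C V hVopen h hh K hKconv hred hzC hzV hsurj ?_ hv
    rw [← hA, hdk, sub_add_cancel]
    exact hk
  rw [← hμ, ContinuousLinearMap.coe_coe, ContinuousLinearMap.adjoint_inner_left, hdk] at h1
  exact h1


private lemma adj_polar_subset (C V : Set Y) (hVopen : IsOpen V) (h : Y → E) (hh : ContDiffOn ℝ 2 h V)
    (K : Set E) (hred : C ∩ V = {y ∈ V | h y ∈ K})
    {y0 : Y} (hy0V : y0 ∈ V) (hh0 : h y0 = 0)
    {μ : E} (hμ : ∀ k ∈ K, (inner ℝ μ k : ℝ) ≤ 0) :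
    ContinuousLinearMap.adjoint (fderiv ℝ h y0) μ ∈ regNormalCone C y0 := by
  set A := fderiv ℝ h y0 with hA
  intro ε hεpos
  have hdiff : HasFDerivAt h A y0 :=
    ((hh.contDiffAt (hVopen.mem_nhds hy0V)).differentiableAt two_ne_zero).hasFDerivAt
  have hμ1 : (0:ℝ) < ‖μ‖ + 1 := by positivity
  have F2 : ∀ᶠ y in 𝓝 y0, ‖h y - h y0 - A (y - y0)‖ ≤ (ε / (‖μ‖ + 1)) * ‖y - y0‖ :=
    (hdiff.isLittleO.def (by positivity)).mono fun y hy => hy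
  have F3 : ∀ᶠ y in 𝓝 y0, y ∈ V := hVopen.mem_nhds hy0V
  rw [eventually_nhdsWithin_iff]
  filter_upwards [F2, F3] with y hy2 hyV hyC
  have hyK : h y ∈ K := by
    have h1 : y ∈ C ∩ V := ⟨hyC, hyV⟩
    rw [hred] at h1; exact h1.2
  have e1 : (inner ℝ (ContinuousLinearMap.adjoint A μ) (y - y0) : ℝ) = inner ℝ μ (A (y - y0)) :=
    ContinuousLinearMap.adjoint_inner_left _ _ _
  have e2 : A (y - y0) = h y + (A (y - y0) - h y) := by abel
  have e3 : ‖A (y - y0) - h y‖ ≤ (ε / (‖μ‖ + 1)) * ‖y - y0‖ := by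
    rw [norm_sub_rev]
    calc ‖h y - A (y - y0)‖ = ‖h y - h y0 - A (y - y0)‖ := by rw [hh0]; abel_nf
      _ ≤ (ε / (‖μ‖ + 1)) * ‖y - y0‖ := hy2
  calc (inner ℝ (ContinuousLinearMap.adjoint A μ) (y - y0) : ℝ)
      = inner ℝ μ (h y) + inner ℝ μ (A (y - y0) - h y) := by
        rw [e1]
        rw [show A (y - y0) = h y + (A (y - y0) - h y) by abel, inner_add_right,
          show h y + (A (y - y0) - h y) - h y = A (y - y0) - h y by abel]
    _ ≤ 0 + ‖μ‖ * ‖A (y - y0) - h y‖ :=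
        add_le_add (hμ _ hyK) (real_inner_le_norm _ _)
    _ ≤ ‖μ‖ * ((ε / (‖μ‖ + 1)) * ‖y - y0‖) := by
        rw [zero_add]
        exact mul_le_mul_of_nonneg_left e3 (norm_nonneg _)
    _ ≤ ε * ‖y - y0‖ := by
        have h4 : ‖μ‖ * (ε / (‖μ‖ + 1)) ≤ ε := by
          rw [mul_div_assoc']
          rw [div_le_iff₀ hμ1]
          nlinarith [norm_nonneg μ]
        calc ‖μ‖ * ((ε / (‖μ‖ + 1)) * ‖y - y0‖) = (‖μ‖ * (ε / (‖μ‖ + 1))) * ‖y - y0‖ := by ring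
          _ ≤ ε * ‖y - y0‖ := mul_le_mul_of_nonneg_right h4 (norm_nonneg _)

end AuxLemmas

/-- if `C` is `C²`-cone reducible at `ȳ` via `h` and the closed
convex cone `K` (with `h ȳ = 0` and `∇h(ȳ)` surjective), then the regular
normal cone of `C` at `ȳ` equals `∇h(ȳ)* K* = ∇h(ȳ)* N_K(0)`, and `C` is
normally regular at `ȳ`: the regular and limiting normal cones coincide. -/
theorem normal_cone_of_reducible_set
    {Y E : Type*} [NormedAddCommGroup Y] [InnerProductSpace ℝ Y] [FiniteDimensional ℝ Y]
    [NormedAddCommGroup E] [InnerProductSpace ℝ E] [FiniteDimensional ℝ E]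
    (C : Set Y) (hC : IsClosed C) (y0 : Y) (hy0 : y0 ∈ C)
    (V : Set Y) (hVopen : IsOpen V) (hy0V : y0 ∈ V)
    (h : Y → E) (hh : ContDiffOn ℝ 2 h V) (hh0 : h y0 = 0)
    (hsurj : Function.Surjective (fderiv ℝ h y0))
    (K : Set E) (hKclosed : IsClosed K) (hKconv : Convex ℝ K)
    (hKcone : ∀ t : ℝ, 0 ≤ t → ∀ x ∈ K, t • x ∈ K) (hK0 : (0 : E) ∈ K)
    (hred : C ∩ V = {y ∈ V | h y ∈ K}) :
    regNormalCone C y0 = ContinuousLinearMap.adjoint (fderiv ℝ h y0) '' polarCone K ∧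
    regNormalCone C y0 = limNormalCone C y0 := by
  have heq1 : regNormalCone C y0 = ContinuousLinearMap.adjoint (fderiv ℝ h y0) '' polarCone K := by
    apply Set.Subset.antisymm
    · intro v hv
      obtain ⟨μ, hμ1, hμ2⟩ := rep_of_regNormal C V hVopen h hh K hKconv hred hy0 hy0V hsurj hv
      refine ⟨μ, ?_, hμ2⟩
      intro k hk
      have h1 := hμ1 k hk
      rwa [hh0, sub_zero] at h1
    · rintro v ⟨μ, hμ, rfl⟩
      exact adj_polar_subset C V hVopen h hh K hred hy0V hh0 hμ
  refine ⟨heq1, Set.Subset.antisymm ?_ ?_⟩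
  · intro v hv
    exact ⟨fun _ => y0, fun _ => v, fun _ => hy0, tendsto_const_nhds, fun _ => hv,
      tendsto_const_nhds⟩
  · rintro v ⟨z, w, hzC, hzlim, hw, hwlim⟩
    set A := fderiv ℝ h y0 with hA
    -- injectivity of the adjoint of A
    have hinj0 : Function.Injective (ContinuousLinearMap.adjoint A) := by
      intro μ1 μ2 hμ
      have h1 : ContinuousLinearMap.adjoint A (μ1 - μ2) = 0 := by rw [map_sub, hμ, sub_self]
      obtain ⟨x, hx⟩ := hsurj (μ1 - μ2)
      have h3 : (inner ℝ (μ1 - μ2) (μ1 - μ2) : ℝ) = 0 := by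
        calc (inner ℝ (μ1 - μ2) (μ1 - μ2) : ℝ) = inner ℝ (μ1 - μ2) (A x) := by rw [hx]
          _ = inner ℝ (ContinuousLinearMap.adjoint A (μ1 - μ2)) x :=
              (ContinuousLinearMap.adjoint_inner_left A x (μ1 - μ2)).symm
          _ = 0 := by rw [h1, inner_zero_left]
      have h4 := inner_self_eq_zero.mp h3
      exact sub_eq_zero.mp h4
    obtain ⟨Kc, hKcpos, hKlip⟩ :=
      LinearMap.exists_antilipschitzWith ((ContinuousLinearMap.adjoint A).toLinearMap)
        (LinearMap.ker_eq_bot.2 hinj0)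
    have hKcR : (0:ℝ) < (Kc:ℝ) := hKcpos
    have hanti : ∀ μ : E, ‖μ‖ ≤ (Kc:ℝ) * ‖ContinuousLinearMap.adjoint A μ‖ := by
      intro μ
      have h1 := hKlip.le_mul_dist μ 0
      simpa [dist_eq_norm, map_zero] using h1
    have hcontD : ContinuousOn (fderiv ℝ h) V := hh.continuousOn_fderiv_of_isOpen hVopen one_le_two
    have hcontAt : ContinuousAt (fderiv ℝ h) y0 := hcontD.continuousAt (hVopen.mem_nhds hy0V)
    have hsmall : ∀ᶠ z' in 𝓝 y0, ‖fderiv ℝ h z' - A‖ < (2 * (Kc:ℝ))⁻¹ := by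
      have h1 : Metric.ball A ((2 * (Kc:ℝ))⁻¹) ∈ 𝓝 A := Metric.ball_mem_nhds _ (by positivity)
      have h2 : ∀ᶠ z' in 𝓝 y0, fderiv ℝ h z' ∈ Metric.ball A ((2 * (Kc:ℝ))⁻¹) := hcontAt h1
      exact h2.mono fun z' hz' => by rwa [Metric.mem_ball, dist_eq_norm] at hz'
    obtain ⟨r, hrpos, hr⟩ := Metric.eventually_nhds_iff.1
      (hsmall.and (hVopen.mem_nhds hy0V : ∀ᶠ y in 𝓝 y0, y ∈ V))
    have huniform : ∀ z' : Y, dist z' y0 < r →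
        Function.Surjective (fderiv ℝ h z') ∧
        ∀ μ : E, ‖μ‖ ≤ 2 * (Kc:ℝ) * ‖ContinuousLinearMap.adjoint (fderiv ℝ h z') μ‖ := by
      intro z' hz'
      set B := fderiv ℝ h z' with hB
      have hBA : ‖B - A‖ < (2 * (Kc:ℝ))⁻¹ := (hr hz').1
      have hbound : ∀ μ : E, ‖μ‖ ≤ 2 * (Kc:ℝ) * ‖ContinuousLinearMap.adjoint B μ‖ := by
        intro μ
        have e1 : ‖ContinuousLinearMap.adjoint A μ - ContinuousLinearMap.adjoint B μ‖
            ≤ ‖A - B‖ * ‖μ‖ := by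
          have e0 : ContinuousLinearMap.adjoint A μ - ContinuousLinearMap.adjoint B μ
              = (ContinuousLinearMap.adjoint (A - B)) μ := by rw [map_sub]; rfl
          rw [e0]
          calc ‖(ContinuousLinearMap.adjoint (A - B)) μ‖
              ≤ ‖ContinuousLinearMap.adjoint (A - B)‖ * ‖μ‖ :=
                ContinuousLinearMap.le_opNorm _ _
            _ = ‖A - B‖ * ‖μ‖ := by
                rw [LinearIsometryEquiv.norm_map ContinuousLinearMap.adjoint (A - B)]
        have t1 := hanti μ
        have t2 : ‖ContinuousLinearMap.adjoint A μ‖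
            ≤ ‖ContinuousLinearMap.adjoint B μ‖ + ‖A - B‖ * ‖μ‖ := by
          calc ‖ContinuousLinearMap.adjoint A μ‖
              = ‖ContinuousLinearMap.adjoint B μ +
                  (ContinuousLinearMap.adjoint A μ - ContinuousLinearMap.adjoint B μ)‖ := by
                congr 1; abel
            _ ≤ ‖ContinuousLinearMap.adjoint B μ‖ +
                  ‖ContinuousLinearMap.adjoint A μ - ContinuousLinearMap.adjoint B μ‖ :=
                norm_add_le _ _
            _ ≤ _ := by exact add_le_add le_rfl e1
        have t3 : ‖A - B‖ * ‖μ‖ ≤ (2 * (Kc:ℝ))⁻¹ * ‖μ‖ := by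
          refine mul_le_mul_of_nonneg_right ?_ (norm_nonneg _)
          rw [norm_sub_rev]; exact hBA.le
        have t4 : (Kc:ℝ) * ((2 * (Kc:ℝ))⁻¹) = 1/2 := by field_simp
        have t5 : ‖μ‖ ≤ (Kc:ℝ) * ‖ContinuousLinearMap.adjoint B μ‖ + 1/2 * ‖μ‖ := by
          calc ‖μ‖ ≤ (Kc:ℝ) * ‖ContinuousLinearMap.adjoint A μ‖ := t1
            _ ≤ (Kc:ℝ) * (‖ContinuousLinearMap.adjoint B μ‖ + (2 * (Kc:ℝ))⁻¹ * ‖μ‖) := by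
                refine mul_le_mul_of_nonneg_left ?_ hKcR.le
                linarith
            _ = (Kc:ℝ) * ‖ContinuousLinearMap.adjoint B μ‖ + ((Kc:ℝ) * (2 * (Kc:ℝ))⁻¹) * ‖μ‖ := by
                ring
            _ = _ := by rw [t4]
        linarith
      refine ⟨?_, hbound⟩
      apply surj_of_inj_adjoint
      intro μ1 μ2 hμ12
      have h5 : ‖μ1 - μ2‖ ≤ 2 * (Kc:ℝ) * ‖ContinuousLinearMap.adjoint B (μ1 - μ2)‖ := hbound _
      rw [map_sub, hμ12, sub_self, norm_zero, mul_zero] at h5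
      exact sub_eq_zero.mp (norm_le_zero_iff.1 h5)
    obtain ⟨N, hN⟩ := (Metric.tendsto_atTop.1 hzlim) r hrpos
    set ζ : ℕ → Y := fun n => z (n + N) with hζdef
    set ω : ℕ → Y := fun n => w (n + N) with hωdef
    have hζr : ∀ n, dist (ζ n) y0 < r := fun n => hN _ (Nat.le_add_left _ _)
    have hζV : ∀ n, ζ n ∈ V := fun n => (hr (hζr n)).2
    have hζC : ∀ n, ζ n ∈ C := fun n => hzC _
    have hζlim : Tendsto ζ atTop (𝓝 y0) := hzlim.comp (tendsto_add_atTop_nat N)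
    have hωlim : Tendsto ω atTop (𝓝 v) := hwlim.comp (tendsto_add_atTop_nat N)
    have hrep : ∀ n : ℕ, ∃ μ : E, (∀ k ∈ K, (inner ℝ μ (k - h (ζ n)) : ℝ) ≤ 0) ∧
        ContinuousLinearMap.adjoint (fderiv ℝ h (ζ n)) μ = ω n :=
      fun n => rep_of_regNormal C V hVopen h hh K hKconv hred (hζC n) (hζV n)
        ((huniform _ (hζr n)).1) (hw _)
    choose μs hμs1 hμs2 using hrep
    obtain ⟨R, hR⟩ : ∃ R : ℝ, ∀ n, ‖ω n‖ ≤ R := by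
      obtain ⟨R, hR⟩ := (isBounded_range_of_tendsto ω hωlim).subset_closedBall 0
      exact ⟨R, fun n => by
        have h6 := hR (mem_range_self n)
        rwa [mem_closedBall, dist_zero_right] at h6⟩
    have hμbdd : ∀ n, μs n ∈ closedBall (0:E) (2 * (Kc:ℝ) * R) := by
      intro n
      rw [mem_closedBall, dist_zero_right]
      calc ‖μs n‖ ≤ 2 * (Kc:ℝ) * ‖ContinuousLinearMap.adjoint (fderiv ℝ h (ζ n)) (μs n)‖ :=
            (huniform _ (hζr n)).2 _
        _ = 2 * (Kc:ℝ) * ‖ω n‖ := by rw [hμs2]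
        _ ≤ 2 * (Kc:ℝ) * R := by
            refine mul_le_mul_of_nonneg_left (hR n) (by positivity)
    obtain ⟨μinf, _, φ, hφmono, hφlim⟩ :=
      tendsto_subseq_of_bounded (isBounded_closedBall) hμbdd
    have hζφlim : Tendsto (fun n => ζ (φ n)) atTop (𝓝 y0) := hζlim.comp hφmono.tendsto_atTop
    have hAcont : Tendsto (fun n => ContinuousLinearMap.adjoint (fderiv ℝ h (ζ (φ n)))) atTop
        (𝓝 (ContinuousLinearMap.adjoint A)) := by
      have h2 : Tendsto (fun n => fderiv ℝ h (ζ (φ n))) atTop (𝓝 A) :=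
        hcontAt.tendsto.comp hζφlim
      have hacont : Continuous (fun L : Y →L[ℝ] E => ContinuousLinearMap.adjoint L) :=
        (ContinuousLinearMap.adjoint : (Y →L[ℝ] E) ≃ₗᵢ⋆[ℝ] (E →L[ℝ] Y)).continuous
      exact (hacont.tendsto A).comp h2
    have hbil : Continuous (fun p : (E →L[ℝ] Y) × E => p.1 p.2) :=
      isBoundedBilinearMap_apply.continuous
    have happlim : Tendsto
        (fun n => ContinuousLinearMap.adjoint (fderiv ℝ h (ζ (φ n))) (μs (φ n))) atTop
        (𝓝 (ContinuousLinearMap.adjoint A μinf)) := by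
      have h9 := (hbil.tendsto (ContinuousLinearMap.adjoint A, μinf)).comp
        (hAcont.prodMk_nhds hφlim)
      exact h9
    have hvAμ : ContinuousLinearMap.adjoint A μinf = v := by
      have h4 : Tendsto (fun n => ω (φ n)) atTop (𝓝 v) := hωlim.comp hφmono.tendsto_atTop
      have h5 : (fun n => ContinuousLinearMap.adjoint (fderiv ℝ h (ζ (φ n))) (μs (φ n)))
          = fun n => ω (φ n) := funext fun n => hμs2 _
      rw [h5] at happlim
      exact tendsto_nhds_unique happlim h4
    have hμpolar : μinf ∈ polarCone K := by
      intro k hk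
      have h7 : Tendsto (fun n => h (ζ (φ n))) atTop (𝓝 (0:E)) := by
        have h8 : Tendsto (fun n => h (ζ (φ n))) atTop (𝓝 (h y0)) :=
          ((hh.continuousOn.continuousAt (hVopen.mem_nhds hy0V)).tendsto).comp hζφlim
        rwa [hh0] at h8
      have h6 : Tendsto (fun n => (inner ℝ (μs (φ n)) (k - h (ζ (φ n))) : ℝ)) atTop
          (𝓝 (inner ℝ μinf (k - 0) : ℝ)) :=
        Filter.Tendsto.inner hφlim (tendsto_const_nhds.sub h7)
      have h8 : (inner ℝ μinf (k - 0) : ℝ) ≤ 0 :=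
        le_of_tendsto h6 (Filter.Eventually.of_forall fun n => hμs1 _ k hk)
      rwa [sub_zero] at h8
    rw [heq1]
    exact ⟨μinf, hμpolar, hvAμ⟩
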